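/- Let 0 < p < q with p + q = 1 and let K_0 be the integral operator on L²(ℝ) with kernel K_0(z,z') = (1/√(2π)) exp(-(p²+q²)(z² + z'²)/4 + pq z z'). Then for every integer i ≥ 0, the function φ_i(z) = exp(-(q²-p²)z²/4) H_i(√((q²-p²)/2) z), where H_i is the i-th Hermite polynomial, is an eigenfunction of K_0 with eigenvalue τ^i/q, i.e. ∫_ℝ K_0(z,z') φ_i(z') dz' = (τ^i/q) φ_i(z), where τ = p/q. -/

import Mathlib

open Polynomial MeasureTheory

/-- The physicists' Hermite polynomials: H₀ = 1, H₁ = 2X,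
    H_{n+2} = 2X·H_{n+1} - 2(n+1)·H_n. -/
noncomputable def hermiteP : ℕ → Polynomial ℝ
  | 0 => 1
  | 1 => C 2 * X
  | (n + 2) => C 2 * X * hermiteP (n + 1) - C ((2 : ℝ) * (n + 1)) * hermiteP n

open Real Filter

lemma hermiteP_zero : hermiteP 0 = 1 := by rw [hermiteP]
lemma hermiteP_one : hermiteP 1 = C 2 * X := by rw [hermiteP]
lemma hermiteP_add_two (n : ℕ) :
    hermiteP (n+2) = C 2 * X * hermiteP (n+1) - C ((2:ℝ) * (n+1)) * hermiteP n := by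
  rw [hermiteP]

lemma hermiteP_deriv : ∀ n : ℕ, derivative (hermiteP (n+1)) = C (2*(n+1) : ℝ) * hermiteP n := by
  intro n
  induction n using Nat.strong_induction_on with
  | _ n ih =>
    match n with
    | 0 => simp [hermiteP_one, hermiteP_zero]
    | 1 =>
      rw [show (1+1 : ℕ) = 0+2 from rfl, hermiteP_add_two]
      simp only [derivative_sub, derivative_mul, derivative_C, derivative_X]
      rw [hermiteP_one, hermiteP_zero]
      simp
      ring
    | (m+2) =>
      rw [show (m+2+1 : ℕ) = (m+1)+2 from rfl, hermiteP_add_two]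
      simp only [derivative_sub, derivative_mul, derivative_C, derivative_X]
      rw [ih (m+1) (by omega), ih m (by omega), hermiteP_add_two]
      push_cast
      simp only [map_add, map_mul, map_one, map_ofNat]
      ring

lemma integrable_pow_gauss (n : ℕ) : Integrable fun x : ℝ => x ^ n * Real.exp (-x ^ 2) := by
  have h := integrable_rpow_mul_exp_neg_mul_sq (b := 1) one_pos
    (s := (n : ℝ)) (neg_one_lt_zero.trans_le (Nat.cast_nonneg n))
  simpa [Real.rpow_natCast] using h

lemma integrable_gauss_poly0 (Q : Polynomial ℝ) :
    Integrable fun x : ℝ => Real.exp (-x ^ 2) * Q.eval x := by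
  induction Q using Polynomial.induction_on' with
  | add p q hp hq => simp only [eval_add, mul_add]; exact hp.add hq
  | monomial k a =>
    simp only [eval_monomial]
    have := ((integrable_pow_gauss k).const_mul a)
    apply this.congr
    filter_upwards with x
    ring

lemma integrable_gauss_poly (y : ℝ) (P : Polynomial ℝ) :
    Integrable fun x : ℝ => Real.exp (-(x - y) ^ 2) * P.eval x := by
  have h := (integrable_gauss_poly0 (P.comp (X + C y))).comp_sub_right y
  apply h.congr
  filter_upwards with x
  simp [eval_comp]

lemma tendsto_gauss_poly_atTop (Q : Polynomial ℝ) :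
    Tendsto (fun x : ℝ => Real.exp (-x ^ 2) * Q.eval x) atTop (nhds 0) := by
  have h1 : Tendsto (fun x : ℝ => Q.eval x / Real.exp x) atTop (nhds 0) :=
    Q.tendsto_div_exp_atTop
  have h2 : Tendsto (fun x : ℝ => Real.exp (x - x ^ 2)) atTop (nhds 0) := by
    apply Real.tendsto_exp_atBot.comp
    apply tendsto_atBot_mono (fun x => by nlinarith [sq_nonneg (x-1)] : ∀ x : ℝ, x - x ^ 2 ≤ 1 - x)
    exact (tendsto_atBot_add_const_left atTop 1 tendsto_neg_atTop_atBot).congr (fun x => by ring)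
  have := h1.mul h2
  rw [mul_zero] at this
  apply this.congr
  intro x
  rw [div_mul_eq_mul_div, Real.exp_sub, ← div_mul_eq_mul_div]
  field_simp [Real.exp_ne_zero]
  rw [mul_assoc, ← Real.exp_add, add_neg_cancel, Real.exp_zero, mul_one]

lemma tendsto_gauss_poly_atBot (Q : Polynomial ℝ) :
    Tendsto (fun x : ℝ => Real.exp (-x ^ 2) * Q.eval x) atBot (nhds 0) := by
  have h := (tendsto_gauss_poly_atTop (Q.comp (-X))).comp tendsto_neg_atBot_atTop
  apply h.congr
  intro x
  simp [Function.comp, eval_comp]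

lemma tendsto_gauss_poly_shift_atTop (y : ℝ) (P : Polynomial ℝ) :
    Tendsto (fun x : ℝ => Real.exp (-(x - y) ^ 2) * P.eval x) atTop (nhds 0) := by
  have h := (tendsto_gauss_poly_atTop (P.comp (X + C y))).comp
    (tendsto_atTop_add_const_right atTop (-y) tendsto_id)
  apply h.congr
  intro x
  simp [Function.comp, eval_comp, sub_eq_add_neg]

lemma tendsto_gauss_poly_shift_atBot (y : ℝ) (P : Polynomial ℝ) :
    Tendsto (fun x : ℝ => Real.exp (-(x - y) ^ 2) * P.eval x) atBot (nhds 0) := by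
  have h := (tendsto_gauss_poly_atBot (P.comp (X + C y))).comp
    (tendsto_atBot_add_const_right atBot (-y) tendsto_id)
  apply h.congr
  intro x
  simp [Function.comp, eval_comp, sub_eq_add_neg]

lemma gauss_ibp (y : ℝ) (P : Polynomial ℝ) :
    ∫ x : ℝ, (x - y) * Real.exp (-(x - y) ^ 2) * P.eval x
      = (1/2) * ∫ x : ℝ, Real.exp (-(x - y) ^ 2) * (derivative P).eval x := by
  set F : ℝ → ℝ := fun x => (-(1:ℝ)/2) * (Real.exp (-(x - y) ^ 2) * P.eval x) with hFdef
  set f' : ℝ → ℝ := fun x => Real.exp (-(x - y) ^ 2) * ((X - C y) * P).eval x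
      - (1/2) * (Real.exp (-(x - y) ^ 2) * (derivative P).eval x) with hf'def
  have hF : ∀ x : ℝ, HasDerivAt F (f' x) x := by
    intro x
    have h1 : HasDerivAt (fun t : ℝ => -(t - y) ^ 2) (-(2 * (x - y))) x := by
      have := (((hasDerivAt_id x).sub_const y).pow 2).neg
      simp at this; exact this
    have he := h1.exp
    have hp := P.hasDerivAt x
    have := (he.mul hp).const_mul (-(1:ℝ)/2)
    refine this.congr_deriv ?_
    simp [f']
    ring
  have hf'int : Integrable f' :=
    (integrable_gauss_poly y ((X - C y) * P)).sub
      ((integrable_gauss_poly y (derivative P)).const_mul (1/2))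
  have htop : Tendsto F atTop (nhds 0) := by
    have := (tendsto_gauss_poly_shift_atTop y P).const_mul (-(1:ℝ)/2)
    simpa using this
  have hbot : Tendsto F atBot (nhds 0) := by
    have := (tendsto_gauss_poly_shift_atBot y P).const_mul (-(1:ℝ)/2)
    simpa using this
  have hIic := integral_Iic_of_hasDerivAt_of_tendsto' (a := 0)
    (fun x _ => hF x) hf'int.integrableOn hbot
  have hIoi := integral_Ioi_of_hasDerivAt_of_tendsto' (a := 0)
    (fun x _ => hF x) hf'int.integrableOn htop
  have h0 : ∫ x : ℝ, f' x = 0 := by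
    rw [← intervalIntegral.integral_Iic_add_Ioi hf'int.integrableOn hf'int.integrableOn, hIic, hIoi]
    ring
  rw [hf'def] at h0
  rw [integral_sub (integrable_gauss_poly y ((X - C y) * P))
    ((integrable_gauss_poly y (derivative P)).const_mul (1/2)),
    integral_const_mul, sub_eq_zero] at h0
  rw [← h0]
  apply integral_congr_ae
  filter_upwards with x
  simp
  ring

lemma gauss_shift (y : ℝ) : ∫ x : ℝ, Real.exp (-(x - y) ^ 2) = Real.sqrt Real.pi := by
  have h := integral_sub_right_eq_self (μ := volume) (fun u : ℝ => Real.exp (-u ^ 2)) y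
  rw [h]
  have := integral_gaussian 1
  simpa using this

lemma integrable_gauss_hermite (α y : ℝ) (k : ℕ) :
    Integrable fun x : ℝ => Real.exp (-(x - y) ^ 2) * (hermiteP k).eval (α * x) := by
  apply (integrable_gauss_poly y ((hermiteP k).comp (C α * X))).congr
  filter_upwards with x
  simp [eval_comp]

lemma integrable_gauss_hermite_mul (α y : ℝ) (k : ℕ) :
    Integrable fun x : ℝ => x * (Real.exp (-(x - y) ^ 2) * (hermiteP k).eval (α * x)) := by
  apply (integrable_gauss_poly y (X * (hermiteP k).comp (C α * X))).congr
  filter_upwards with x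
  simp [eval_comp]
  ring

lemma gauss_hermite_ibp (α y : ℝ) (k : ℕ) :
    ∫ x : ℝ, (x - y) * (Real.exp (-(x - y) ^ 2) * (hermiteP (k+1)).eval (α * x))
      = α * (k+1) * ∫ x : ℝ, Real.exp (-(x - y) ^ 2) * (hermiteP k).eval (α * x) := by
  have h := gauss_ibp y ((hermiteP (k+1)).comp (C α * X))
  rw [derivative_comp, hermiteP_deriv] at h
  have hl : (∫ x : ℝ, (x - y) * Real.exp (-(x - y) ^ 2)
        * ((hermiteP (k+1)).comp (C α * X)).eval x)
      = ∫ x : ℝ, (x - y) * (Real.exp (-(x - y) ^ 2) * (hermiteP (k+1)).eval (α * x)) := by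
    apply integral_congr_ae; filter_upwards with x; simp [eval_comp]; ring
  have hr : (∫ x : ℝ, Real.exp (-(x - y) ^ 2)
        * (derivative (C α * X) * (C (2*(k+1) : ℝ) * hermiteP k).comp (C α * X)).eval x)
      = ∫ x : ℝ, (α * (2*(k+1))) * (Real.exp (-(x - y) ^ 2) * (hermiteP k).eval (α * x)) := by
    apply integral_congr_ae; filter_upwards with x; simp [eval_comp]; ring
  rw [hl, hr, integral_const_mul] at h
  rw [h]
  ring

lemma J_rec (α y : ℝ) (k : ℕ) :
    ∫ x : ℝ, Real.exp (-(x - y) ^ 2) * (hermiteP (k+2)).eval (α * x)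
      = 2*α*y * (∫ x : ℝ, Real.exp (-(x - y) ^ 2) * (hermiteP (k+1)).eval (α * x))
        + (2*α^2*((k:ℝ)+1) - 2*((k:ℝ)+1))
          * (∫ x : ℝ, Real.exp (-(x - y) ^ 2) * (hermiteP k).eval (α * x)) := by
  have hxf : Integrable (fun x : ℝ =>
      (x - y) * (Real.exp (-(x - y) ^ 2) * (hermiteP (k+1)).eval (α * x))) := by
    have := (integrable_gauss_hermite_mul α y (k+1)).sub
      ((integrable_gauss_hermite α y (k+1)).const_mul y)
    apply this.congr
    filter_upwards with x
    simp only [Pi.sub_apply]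
    ring
  have e : ∀ x : ℝ, Real.exp (-(x - y) ^ 2) * (hermiteP (k+2)).eval (α * x)
      = ((2*α) * ((x - y) * (Real.exp (-(x - y) ^ 2) * (hermiteP (k+1)).eval (α * x)))
          + (2*α*y) * (Real.exp (-(x - y) ^ 2) * (hermiteP (k+1)).eval (α * x)))
        - (2*((k:ℝ)+1)) * (Real.exp (-(x - y) ^ 2) * (hermiteP k).eval (α * x)) := by
    intro x
    rw [hermiteP_add_two]
    simp only [eval_sub, eval_mul, eval_C, eval_X]
    push_cast
    ring
  rw [integral_congr_ae (Filter.Eventually.of_forall e), integral_sub, integral_add,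
    integral_const_mul, integral_const_mul, integral_const_mul, gauss_hermite_ibp]
  · push_cast; ring
  · exact hxf.const_mul _
  · exact (integrable_gauss_hermite α y (k+1)).const_mul _
  · exact (hxf.const_mul _).add ((integrable_gauss_hermite α y (k+1)).const_mul _)
  · exact (integrable_gauss_hermite α y k).const_mul _

lemma gauss_hermite (α : ℝ) (hα : α ^ 2 < 1) (y : ℝ) (n : ℕ) :
    ∫ x : ℝ, Real.exp (-(x - y) ^ 2) * (hermiteP n).eval (α * x)
      = Real.sqrt Real.pi * Real.sqrt (1 - α ^ 2) ^ n
        * (hermiteP n).eval (α * y / Real.sqrt (1 - α ^ 2)) := by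
  have h1 : (0:ℝ) < 1 - α ^ 2 := by linarith
  set β := Real.sqrt (1 - α ^ 2) with hβdef
  have hβpos : 0 < β := Real.sqrt_pos.mpr h1
  have hβsq : β ^ 2 = 1 - α ^ 2 := Real.sq_sqrt h1.le
  induction n using Nat.strong_induction_on with
  | _ n ih =>
    match n with
    | 0 => simp [hermiteP_zero, gauss_shift]
    | 1 =>
      have hxf : Integrable (fun x : ℝ =>
          (x - y) * (Real.exp (-(x - y) ^ 2) * (hermiteP 0).eval (α * x))) := by
        have := (integrable_gauss_hermite_mul α y 0).sub
          ((integrable_gauss_hermite α y 0).const_mul y)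
        apply this.congr
        filter_upwards with x
        simp only [Pi.sub_apply]
        ring
      have hibp := gauss_ibp y (1 : Polynomial ℝ)
      simp only [derivative_one, eval_zero, mul_zero, integral_zero] at hibp
      have e : ∀ x : ℝ, Real.exp (-(x - y) ^ 2) * (hermiteP 1).eval (α * x)
          = (2*α) * ((x - y) * Real.exp (-(x - y) ^ 2) * eval x (1 : Polynomial ℝ))
            + (2*α*y) * (Real.exp (-(x - y) ^ 2) * (hermiteP 0).eval (α * x)) := by
        intro x
        simp [hermiteP_one, hermiteP_zero]
        ring
      rw [integral_congr_ae (Filter.Eventually.of_forall e), integral_add,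
        integral_const_mul, integral_const_mul, hibp]
      · have hg : (∫ x : ℝ, Real.exp (-(x - y) ^ 2) * (hermiteP 0).eval (α * x))
            = Real.sqrt Real.pi := by
          simp [hermiteP_zero, gauss_shift]
        rw [hg, hermiteP_one]
        simp only [eval_mul, eval_C, eval_X, mul_zero]
        field_simp
        ring
      · apply ((hxf).const_mul (2*α)).congr
        filter_upwards with x
        simp [hermiteP_zero]
      · exact (integrable_gauss_hermite α y 0).const_mul _
    | (m+2) =>
      rw [J_rec, ih (m+1) (by omega), ih m (by omega), hermiteP_add_two]
      have hc : 2*α^2*((m:ℝ)+1) - 2*((m:ℝ)+1) = -(2*((m:ℝ)+1)*β^2) := by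
        rw [hβsq]; ring
      rw [hc]
      simp only [eval_sub, eval_mul, eval_C, eval_X]
      push_cast
      field_simp
      ring

theorem stmt5 (p q : ℝ) (hp : 0 < p) (hpq : p < q) (hsum : p + q = 1)
    (τ : ℝ) (hτ : τ = p / q) (i : ℕ) (z : ℝ) :
    ∫ z' : ℝ,
        (1 / Real.sqrt (2 * Real.pi)) *
          Real.exp (-(p ^ 2 + q ^ 2) * (z ^ 2 + z' ^ 2) / 4 + p * q * z * z') *
          (Real.exp (-(q ^ 2 - p ^ 2) * z' ^ 2 / 4) *
            (hermiteP i).eval (Real.sqrt ((q ^ 2 - p ^ 2) / 2) * z')) =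
      (τ ^ i / q) *
        (Real.exp (-(q ^ 2 - p ^ 2) * z ^ 2 / 4) *
          (hermiteP i).eval (Real.sqrt ((q ^ 2 - p ^ 2) / 2) * z)) := by
  have hq : 0 < q := lt_trans hp hpq
  have hqp2 : 0 < q ^ 2 - p ^ 2 := by nlinarith
  have h2 : (0:ℝ) < Real.sqrt 2 := by positivity
  have hs2 : Real.sqrt 2 ^ 2 = 2 := Real.sq_sqrt (by norm_num)
  have hπ : (0:ℝ) < Real.sqrt Real.pi := Real.sqrt_pos.mpr Real.pi_pos
  set α : ℝ := Real.sqrt (q ^ 2 - p ^ 2) / q with hαdef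
  set y : ℝ := p * z / Real.sqrt 2 with hydef
  set a : ℝ := q / Real.sqrt 2 with hadef
  have ha : 0 < a := by positivity
  have hαsq : α ^ 2 = (q ^ 2 - p ^ 2) / q ^ 2 := by
    rw [hαdef, div_pow, Real.sq_sqrt hqp2.le]
  have hα1 : α ^ 2 < 1 := by
    rw [hαsq, div_lt_one (by positivity)]; nlinarith
  have hβ : Real.sqrt (1 - α ^ 2) = p / q := by
    rw [hαsq, show 1 - (q ^ 2 - p ^ 2) / q ^ 2 = (p / q) ^ 2 by field_simp; ring,
      Real.sqrt_sq (by positivity)]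
  have hc : Real.sqrt ((q ^ 2 - p ^ 2) / 2) = α * a := by
    rw [show (q ^ 2 - p ^ 2) / 2 = (α * a) ^ 2 by
      rw [mul_pow, hαsq, hadef, div_pow, hs2]; field_simp,
      Real.sqrt_sq (by positivity)]
  have key : ∀ z' : ℝ,
      (1 / Real.sqrt (2 * Real.pi)) *
          Real.exp (-(p ^ 2 + q ^ 2) * (z ^ 2 + z' ^ 2) / 4 + p * q * z * z') *
          (Real.exp (-(q ^ 2 - p ^ 2) * z' ^ 2 / 4) *
            (hermiteP i).eval (Real.sqrt ((q ^ 2 - p ^ 2) / 2) * z'))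
      = ((1 / Real.sqrt (2 * Real.pi)) * Real.exp (-(q ^ 2 - p ^ 2) * z ^ 2 / 4)) *
          (Real.exp (-(a * z' - y) ^ 2) * (hermiteP i).eval (α * (a * z'))) := by
    intro z'
    rw [hc, ← mul_assoc α a z']
    have haz : (a * z' - y) ^ 2 = (q * z' - p * z) ^ 2 / 2 := by
      rw [show a * z' - y = (q * z' - p * z) / Real.sqrt 2 by
        rw [hadef, hydef]; field_simp, div_pow, hs2]
    have hA : -(p ^ 2 + q ^ 2) * (z ^ 2 + z' ^ 2) / 4 + p * q * z * z'
          + (-(q ^ 2 - p ^ 2) * z' ^ 2 / 4)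
        = -(q ^ 2 - p ^ 2) * z ^ 2 / 4 + (-(a * z' - y) ^ 2) := by
      rw [haz]; ring
    have e1 : Real.exp (-(p ^ 2 + q ^ 2) * (z ^ 2 + z' ^ 2) / 4 + p * q * z * z')
          * Real.exp (-(q ^ 2 - p ^ 2) * z' ^ 2 / 4)
        = Real.exp (-(q ^ 2 - p ^ 2) * z ^ 2 / 4) * Real.exp (-(a * z' - y) ^ 2) := by
      rw [← Real.exp_add, ← Real.exp_add, hA]
    linear_combination (1 / Real.sqrt (2 * Real.pi) * (hermiteP i).eval (α * a * z')) * e1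
  rw [integral_congr_ae (Filter.Eventually.of_forall key), integral_const_mul]
  rw [show (∫ z' : ℝ, Real.exp (-(a * z' - y) ^ 2) * (hermiteP i).eval (α * (a * z')))
      = |a⁻¹| • ∫ u : ℝ, Real.exp (-(u - y) ^ 2) * (hermiteP i).eval (α * u) from
    MeasureTheory.Measure.integral_comp_mul_left
      (fun u : ℝ => Real.exp (-(u - y) ^ 2) * (hermiteP i).eval (α * u)) a]
  rw [smul_eq_mul, gauss_hermite α hα1 y i, hβ]
  have harg : α * y / (p / q) = α * a * z := by
    rw [hαdef, hydef, hadef]; field_simp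
  rw [harg, ← hc, hτ]
  have habs : |a⁻¹| = Real.sqrt 2 / q := by
    rw [abs_of_pos (by positivity), hadef]; field_simp
  rw [habs, Real.sqrt_mul (by norm_num : (0:ℝ) ≤ 2) Real.pi]
  field_simp
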